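/- A norm s on ℝ² is minimal for the Reshetnyak energy I²₊(s) = max_{v∈S¹} s(v)² within its SL₂-orbit (i.e. I²₊(s) ≤ I²₊(s∘T) for all T ∈ SL(2,ℝ)) if and only if s is isotropic, i.e. the largest-area ellipse inscribed in the unit ball of s is a round Euclidean disc. -/

import Mathlib

open Matrix MeasureTheory Real

noncomputable section

/-- The Euclidean plane. -/
abbrev E2 := EuclideanSpace ℝ (Fin 2)

/-- `SL(2,ℝ)` as matrices of determinant one. -/
abbrev SL2 := Matrix.SpecialLinearGroup (Fin 2) ℝ

/-- The seminorm `v ↦ s (M v)`, i.e. `s ∘ M`. -/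
def compM (s : Seminorm ℝ E2) (M : Matrix (Fin 2) (Fin 2) ℝ) : Seminorm ℝ E2 :=
  s.comp (Matrix.toEuclideanLin M)

/-- A seminorm is a norm iff it is positive away from the origin. -/
def IsNorm (s : Seminorm ℝ E2) : Prop := ∀ v : E2, v ≠ 0 → 0 < s v

/-- Monotonicity of a functional on seminorms. -/
def Monot (J : Seminorm ℝ E2 → ℝ) : Prop := ∀ s s' : Seminorm ℝ E2, s' ≤ s → J s' ≤ J s

/-- Degree 2 homogeneity of a functional on seminorms. -/
def Homog (J : Seminorm ℝ E2 → ℝ) : Prop :=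
  ∀ (c : NNReal) (s : Seminorm ℝ E2), J (c • s) = (c : ℝ) ^ 2 * J s

/-- `SL₂`-invariance of a functional on seminorms. -/
def SL2inv (J : Seminorm ℝ E2 → ℝ) : Prop :=
  ∀ (s : Seminorm ℝ E2) (T : SL2), J (compM s (T : Matrix (Fin 2) (Fin 2) ℝ)) = J s

/-- The Reshetnyak energy `I²₊(s) = max_{v ∈ S¹} s(v)²`. -/
def Iplus (s : Seminorm ℝ E2) : ℝ := ⨆ v : Metric.sphere (0 : E2) 1, (s (v : E2)) ^ 2

/-- The unit ball of a seminorm. -/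
def unitBallS (s : Seminorm ℝ E2) : Set E2 := {v | s v ≤ 1}

/-- The ellipse `M(D̄)` is inscribed in the unit ball of `s`. -/
def ellipseIn (s : Seminorm ℝ E2) (M : Matrix (Fin 2) (Fin 2) ℝ) : Prop :=
  (Matrix.toEuclideanLin M) '' (Metric.closedBall 0 1) ⊆ unitBallS s

/-- The area of the largest ellipse inscribed in the unit ball of `s`
(the area of the Loewner ellipse); the ellipse `M(D̄)` has area `π |det M|`. -/
def LoewnerArea (s : Seminorm ℝ E2) : ℝ :=
  sSup {a : ℝ | ∃ M : Matrix (Fin 2) (Fin 2) ℝ, ellipseIn s M ∧ a = π * |M.det|}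

/-- The inscribed Riemannian (Ivanov) Jacobian `J^i(s) = π / |L|`. -/
def Ji (s : Seminorm ℝ E2) : ℝ := π / LoewnerArea s

/-- `s` is isotropic: some round disc `t·D̄` is inscribed in the unit ball of `s` and has at
least the area of every inscribed ellipse, i.e. the Loewner ellipse is a round disc. -/
def Isotropic (s : Seminorm ℝ E2) : Prop :=
  ∃ t : ℝ, 0 < t ∧ Metric.closedBall (0 : E2) t ⊆ unitBallS s ∧
    ∀ M : Matrix (Fin 2) (Fin 2) ℝ, ellipseIn s M → π * |M.det| ≤ π * t ^ 2

/-- A Jacobian (definition of area): monotone, degree-2 homogeneous, `SL₂`-invariant,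
normalized on the Euclidean norm. -/
def IsJacobian (J : Seminorm ℝ E2 → ℝ) : Prop :=
  (∀ s, 0 ≤ J s) ∧ Monot J ∧ Homog J ∧ SL2inv J ∧ J (normSeminorm ℝ E2) = 1

namespace Stmt10Aux

lemma abs_coord_le_norm (v : E2) (i : Fin 2) : |v i| ≤ ‖v‖ := by
  rw [EuclideanSpace.norm_eq, ← Real.sqrt_sq (abs_nonneg (v i))]
  apply Real.sqrt_le_sqrt
  have h := Finset.single_le_sum (f := fun j => ‖v j‖ ^ 2) (fun j _ => sq_nonneg _)
    (Finset.mem_univ i)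
  simpa [Real.norm_eq_abs, sq_abs] using h

/-- Every seminorm on `E2` is bounded by a multiple of the Euclidean norm. -/
lemma seminorm_bound (s : Seminorm ℝ E2) : ∃ C : ℝ, 0 ≤ C ∧ ∀ v : E2, s v ≤ C * ‖v‖ := by
  refine ⟨s (EuclideanSpace.single 0 (1:ℝ)) + s (EuclideanSpace.single 1 (1:ℝ)),
    by positivity, fun v => ?_⟩
  have hv : v = v 0 • EuclideanSpace.single 0 (1:ℝ) + v 1 • EuclideanSpace.single 1 (1:ℝ) := by
    ext i; fin_cases i <;> simp [EuclideanSpace.single_apply]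
  calc s v = s (v 0 • EuclideanSpace.single 0 (1:ℝ) + v 1 • EuclideanSpace.single 1 (1:ℝ)) := by
        rw [← hv]
    _ ≤ s (v 0 • EuclideanSpace.single 0 (1:ℝ)) + s (v 1 • EuclideanSpace.single 1 (1:ℝ)) :=
        map_add_le_add s _ _
    _ = |v 0| * s (EuclideanSpace.single 0 (1:ℝ)) + |v 1| * s (EuclideanSpace.single 1 (1:ℝ)) := by
        rw [map_smul_eq_mul, map_smul_eq_mul, Real.norm_eq_abs, Real.norm_eq_abs]
    _ ≤ ‖v‖ * s (EuclideanSpace.single 0 (1:ℝ)) + ‖v‖ * s (EuclideanSpace.single 1 (1:ℝ)) := by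
        gcongr <;> first
          | exact apply_nonneg s _
          | exact abs_coord_le_norm v _
    _ = _ := by ring

def vone : Metric.sphere (0 : E2) 1 :=
  ⟨EuclideanSpace.single 0 (1:ℝ), by
    simp [mem_sphere_zero_iff_norm, EuclideanSpace.norm_single]⟩

instance : Nonempty (Metric.sphere (0 : E2) 1) := ⟨vone⟩

lemma bddAbove_iplus (s : Seminorm ℝ E2) :
    BddAbove (Set.range fun v : Metric.sphere (0 : E2) 1 => (s (v : E2)) ^ 2) := by
  obtain ⟨C, hC0, hC⟩ := seminorm_bound s
  refine ⟨C ^ 2, ?_⟩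
  rintro _ ⟨v, rfl⟩
  have hv : ‖(v : E2)‖ = 1 := mem_sphere_zero_iff_norm.mp v.2
  have h := hC v
  rw [hv, mul_one] at h
  exact pow_le_pow_left₀ (apply_nonneg s _) h 2

lemma iplus_nonneg (s : Seminorm ℝ E2) : 0 ≤ Iplus s :=
  Real.iSup_nonneg fun _ => sq_nonneg _

lemma sq_le_iplus (s : Seminorm ℝ E2) (v : Metric.sphere (0 : E2) 1) :
    (s (v : E2)) ^ 2 ≤ Iplus s := le_ciSup (bddAbove_iplus s) v

lemma apply_le_sqrt_iplus (s : Seminorm ℝ E2) (v : E2) :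
    s v ≤ Real.sqrt (Iplus s) * ‖v‖ := by
  rcases eq_or_ne v 0 with rfl | hv
  · simp
  · have hn : ‖v‖ ≠ 0 := norm_ne_zero_iff.mpr hv
    set u : E2 := ‖v‖⁻¹ • v with hu
    have hus : ‖u‖ = 1 := by
      rw [hu, norm_smul, norm_inv, norm_norm, inv_mul_cancel₀ hn]
    have hmem : u ∈ Metric.sphere (0 : E2) 1 := mem_sphere_zero_iff_norm.mpr hus
    have h1 : s u ≤ Real.sqrt (Iplus s) := by
      have h2 := sq_le_iplus s ⟨u, hmem⟩
      calc s u = Real.sqrt ((s u) ^ 2) := (Real.sqrt_sq (apply_nonneg s u)).symm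
        _ ≤ _ := Real.sqrt_le_sqrt h2
    have hvu : v = ‖v‖ • u := by rw [hu, smul_smul, mul_inv_cancel₀ hn, one_smul]
    calc s v = s (‖v‖ • u) := by rw [← hvu]
      _ = ‖v‖ * s u := by rw [map_smul_eq_mul, Real.norm_eq_abs, abs_norm]
      _ ≤ ‖v‖ * Real.sqrt (Iplus s) := by
          exact mul_le_mul_of_nonneg_left h1 (norm_nonneg v)
      _ = _ := by ring

lemma iplus_le_sq (s : Seminorm ℝ E2) (C : ℝ) (hC0 : 0 ≤ C)
    (hC : ∀ v : E2, ‖v‖ = 1 → s v ≤ C) : Iplus s ≤ C ^ 2 := by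
  apply ciSup_le
  intro v
  exact pow_le_pow_left₀ (apply_nonneg s _) (hC v (mem_sphere_zero_iff_norm.mp v.2)) 2

lemma sqrt_iplus_pos (s : Seminorm ℝ E2) (hs : IsNorm s) : 0 < Real.sqrt (Iplus s) := by
  have h1 : (0:ℝ) < s (vone : E2) := hs _ (by
    intro h
    have := congrFun (congrArg (fun x : E2 => (x : Fin 2 → ℝ)) h) 0
    simp [vone, EuclideanSpace.single_apply] at this)
  have h2 := apply_le_sqrt_iplus s (vone : E2)
  have h3 : ‖(vone : E2)‖ = 1 := mem_sphere_zero_iff_norm.mp vone.2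
  rw [h3, mul_one] at h2
  linarith

lemma toEL_mul (M N : Matrix (Fin 2) (Fin 2) ℝ) (v : E2) :
    Matrix.toEuclideanLin (M * N) v = Matrix.toEuclideanLin M (Matrix.toEuclideanLin N v) := by
  simp [Matrix.toEuclideanLin_apply, Matrix.mulVec_mulVec]

lemma toEL_smul (c : ℝ) (M : Matrix (Fin 2) (Fin 2) ℝ) (v : E2) :
    Matrix.toEuclideanLin (c • M) v = c • Matrix.toEuclideanLin M v := by
  rw [_root_.map_smul]; rfl

lemma toEL_inj (T : Matrix (Fin 2) (Fin 2) ℝ) (hd : T.det = 1) (v : E2)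
    (h : Matrix.toEuclideanLin T v = 0) : v = 0 := by
  have h1 : T⁻¹ * T = 1 := Matrix.nonsing_inv_mul T (by simp [hd])
  have h2 : Matrix.toEuclideanLin (T⁻¹ * T) v
      = Matrix.toEuclideanLin T⁻¹ (Matrix.toEuclideanLin T v) := toEL_mul _ _ _
  rw [h1, h, map_zero] at h2
  simpa [Matrix.toEuclideanLin_apply, Matrix.one_mulVec] using h2

/-- The reflection matrix. -/
def Rm : Matrix (Fin 2) (Fin 2) ℝ := !![(1:ℝ), 0; 0, -1]

lemma det_Rm : Rm.det = -1 := by simp [Rm, Matrix.det_fin_two_of]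

lemma norm_Rm (v : E2) : ‖Matrix.toEuclideanLin Rm v‖ = ‖v‖ := by
  simp [Rm, EuclideanSpace.norm_eq, Matrix.toEuclideanLin_apply, Matrix.mulVec, dotProduct,
    Fin.sum_univ_two]

lemma inv_swap {a b : ℝ} (ha : 0 < a) (hb : 0 < b) (h : a ≤ b⁻¹) : b ≤ a⁻¹ := by
  have h1 : a * a⁻¹ = 1 := mul_inv_cancel₀ ha.ne'
  have h2 : b * b⁻¹ = 1 := mul_inv_cancel₀ hb.ne'
  nlinarith [inv_pos.mpr ha, inv_pos.mpr hb]

lemma ellipse_bound (s : Seminorm ℝ E2) (M : Matrix (Fin 2) (Fin 2) ℝ)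
    (h : ellipseIn s M) (v : E2) : s (Matrix.toEuclideanLin M v) ≤ ‖v‖ := by
  rcases eq_or_ne v 0 with rfl | hv
  · simp
  · have hn : ‖v‖ ≠ 0 := norm_ne_zero_iff.mpr hv
    set u : E2 := ‖v‖⁻¹ • v with hu
    have hus : ‖u‖ = 1 := by rw [hu, norm_smul, norm_inv, norm_norm, inv_mul_cancel₀ hn]
    have hmem : u ∈ Metric.closedBall (0 : E2) 1 := by
      rw [Metric.mem_closedBall, dist_zero_right, hus]
    have h1 : s (Matrix.toEuclideanLin M u) ≤ 1 := h ⟨u, hmem, rfl⟩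
    have hvu : v = ‖v‖ • u := by rw [hu, smul_smul, mul_inv_cancel₀ hn, one_smul]
    calc s (Matrix.toEuclideanLin M v) = s (Matrix.toEuclideanLin M (‖v‖ • u)) := by rw [← hvu]
      _ = s (‖v‖ • Matrix.toEuclideanLin M u) := by rw [_root_.map_smul]
      _ = ‖v‖ * s (Matrix.toEuclideanLin M u) := by
          rw [map_smul_eq_mul, Real.norm_eq_abs, abs_norm]
      _ ≤ ‖v‖ * 1 := mul_le_mul_of_nonneg_left h1 (norm_nonneg v)
      _ = ‖v‖ := mul_one _

end Stmt10Aux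


open Stmt10Aux

/-- A norm is minimal for the Reshetnyak energy within its `SL₂`-orbit iff it is isotropic. -/
theorem stmt10 (s : Seminorm ℝ E2) (hs : IsNorm s) :
    (∀ T : SL2, Iplus s ≤ Iplus (compM s (T : Matrix (Fin 2) (Fin 2) ℝ))) ↔ Isotropic s := by
  constructor
  · intro h
    set K := Real.sqrt (Iplus s) with hKdef
    have hK : 0 < K := sqrt_iplus_pos s hs
    have hK2 : K ^ 2 = Iplus s := Real.sq_sqrt (iplus_nonneg s)
    refine ⟨K⁻¹, inv_pos.mpr hK, ?_, ?_⟩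
    · intro v hv
      rw [Metric.mem_closedBall, dist_zero_right] at hv
      have h1 := apply_le_sqrt_iplus s v
      have : s v ≤ K * K⁻¹ :=
        h1.trans (mul_le_mul_of_nonneg_left hv hK.le)
      rwa [mul_inv_cancel₀ hK.ne'] at this
    · intro M hM
      by_cases hd : M.det = 0
      · rw [hd, abs_zero, mul_zero]
        positivity
      · set d := |M.det| with hddef
        have hd' : 0 < d := abs_pos.mpr hd
        set c := Real.sqrt d with hcdef
        have hc : 0 < c := Real.sqrt_pos.mpr hd'
        have hc2 : c ^ 2 = d := Real.sq_sqrt hd'.le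
        -- find a matrix with positive determinant `d` and the same inscribed-ellipse bound
        obtain ⟨M₂, hdet2, hbnd2⟩ :
            ∃ M₂ : Matrix (Fin 2) (Fin 2) ℝ, M₂.det = d ∧
              ∀ v : E2, s (Matrix.toEuclideanLin M₂ v) ≤ ‖v‖ := by
          rcases lt_or_gt_of_ne hd with hneg | hpos
          · refine ⟨M * Rm, ?_, fun v => ?_⟩
            · rw [Matrix.det_mul, det_Rm, hddef, abs_of_neg hneg]; ring
            · rw [toEL_mul]
              calc s (Matrix.toEuclideanLin M (Matrix.toEuclideanLin Rm v))
                  ≤ ‖Matrix.toEuclideanLin Rm v‖ := ellipse_bound s M hM _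
                _ = ‖v‖ := norm_Rm v
          · exact ⟨M, by rw [hddef, abs_of_pos hpos], ellipse_bound s M hM⟩
        have hdetT : (c⁻¹ • M₂).det = 1 := by
          rw [Matrix.det_smul, hdet2]
          simp only [Fintype.card_fin, inv_pow]
          rw [hc2]
          exact inv_mul_cancel₀ hd'.ne'
        have hle := h ⟨c⁻¹ • M₂, hdetT⟩
        have hbT : Iplus (compM s (c⁻¹ • M₂)) ≤ (c⁻¹) ^ 2 := by
          apply iplus_le_sq _ _ (by positivity)
          intro v hv
          have : compM s (c⁻¹ • M₂) v = c⁻¹ * s (Matrix.toEuclideanLin M₂ v) := by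
            rw [compM, Seminorm.comp_apply, toEL_smul, map_smul_eq_mul, Real.norm_eq_abs,
              abs_of_pos (inv_pos.mpr hc)]
          rw [this]
          calc c⁻¹ * s (Matrix.toEuclideanLin M₂ v) ≤ c⁻¹ * ‖v‖ :=
              mul_le_mul_of_nonneg_left (hbnd2 v) (inv_pos.mpr hc).le
            _ = c⁻¹ := by rw [hv, mul_one]
        have hK2le : K ^ 2 ≤ (c⁻¹) ^ 2 := by
          rw [hK2]
          exact le_trans (hle) hbT
        have hKc : K ≤ c⁻¹ := by
          calc K = Real.sqrt (K ^ 2) := (Real.sqrt_sq hK.le).symm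
            _ ≤ Real.sqrt ((c⁻¹) ^ 2) := Real.sqrt_le_sqrt hK2le
            _ = c⁻¹ := Real.sqrt_sq (by positivity)
        have hcK : c ≤ K⁻¹ := inv_swap hK hc hKc
        calc π * |M.det| = π * c ^ 2 := by rw [← hddef, hc2]
          _ ≤ π * (K⁻¹) ^ 2 := by
              have := pow_le_pow_left₀ hc.le hcK 2
              exact mul_le_mul_of_nonneg_left this pi_pos.le
  · rintro ⟨t, ht, hdisc, hmax⟩ T
    -- first: Iplus s ≤ (t⁻¹)^2
    have h1 : Iplus s ≤ (t⁻¹) ^ 2 := by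
      apply iplus_le_sq _ _ (by positivity)
      intro v hv
      have hmem : t • v ∈ Metric.closedBall (0 : E2) t := by
        rw [Metric.mem_closedBall, dist_zero_right, norm_smul, Real.norm_eq_abs,
          abs_of_pos ht, hv, mul_one]
      have h2 : s (t • v) ≤ 1 := hdisc hmem
      have h3 : t * s v ≤ 1 := by
        rwa [map_smul_eq_mul, Real.norm_eq_abs, abs_of_pos ht] at h2
      have h4 := mul_le_mul_of_nonneg_left h3 (inv_pos.mpr ht).le
      rw [← mul_assoc, inv_mul_cancel₀ ht.ne', one_mul, mul_one] at h4
      exact h4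
    set K₁ := Real.sqrt (Iplus (compM s (T : Matrix (Fin 2) (Fin 2) ℝ))) with hK₁def
    have hTn : IsNorm (compM s (T : Matrix (Fin 2) (Fin 2) ℝ)) := by
      intro v hv
      apply hs
      intro hzero
      exact hv (toEL_inj _ T.2 v hzero)
    have hK₁ : 0 < K₁ := sqrt_iplus_pos _ hTn
    have hK₁2 : K₁ ^ 2 = Iplus (compM s (T : Matrix (Fin 2) (Fin 2) ℝ)) :=
      Real.sq_sqrt (iplus_nonneg _)
    -- the ellipse K₁⁻¹ • T is inscribed
    have hell : ellipseIn s (K₁⁻¹ • (T : Matrix (Fin 2) (Fin 2) ℝ)) := by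
      rintro _ ⟨u, hu, rfl⟩
      rw [Metric.mem_closedBall, dist_zero_right] at hu
      show s _ ≤ 1
      rw [toEL_smul, map_smul_eq_mul, Real.norm_eq_abs, abs_of_pos (inv_pos.mpr hK₁)]
      have h4 : s (Matrix.toEuclideanLin (T : Matrix (Fin 2) (Fin 2) ℝ) u) ≤ K₁ * ‖u‖ :=
        apply_le_sqrt_iplus (compM s (T : Matrix (Fin 2) (Fin 2) ℝ)) u
      calc K₁⁻¹ * s (Matrix.toEuclideanLin (T : Matrix (Fin 2) (Fin 2) ℝ) u)
          ≤ K₁⁻¹ * (K₁ * ‖u‖) := mul_le_mul_of_nonneg_left h4 (inv_pos.mpr hK₁).le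
        _ = ‖u‖ := by rw [← mul_assoc, inv_mul_cancel₀ hK₁.ne', one_mul]
        _ ≤ 1 := hu
    have hdet : |(K₁⁻¹ • (T : Matrix (Fin 2) (Fin 2) ℝ)).det| = (K₁⁻¹) ^ 2 := by
      rw [Matrix.det_smul, T.2]
      simp [Fintype.card_fin]
    have h5 := hmax _ hell
    rw [hdet] at h5
    have h6 : (K₁⁻¹) ^ 2 ≤ t ^ 2 := le_of_mul_le_mul_left (by linarith [h5]) pi_pos
    have h7 : (t⁻¹) ^ 2 ≤ K₁ ^ 2 := by
      rw [inv_pow] at h6 ⊢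
      have := inv_swap (a := (K₁ ^ 2)⁻¹) (b := (t ^ 2)⁻¹)
        (by positivity) (by positivity) (by rwa [inv_inv])
      rwa [inv_inv] at this
    calc Iplus s ≤ (t⁻¹) ^ 2 := h1
      _ ≤ K₁ ^ 2 := h7
      _ = _ := hK₁2
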